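/- Let f : ℝ → ℝ be 3-monotone (f' exists and is convex), and let x₀ < x₁ < x₂ < x₃ be arbitrary. Then [x₀,x₁,x₂,x₃]f ≥ 0. -/

import Mathlib

/-- Third divided difference `[x₀,x₁,x₂,x₃]f`. -/
noncomputable def dd3 (f : ℝ → ℝ) (x0 x1 x2 x3 : ℝ) : ℝ :=
  (((f x3 - f x2) / (x3 - x2) - (f x2 - f x1) / (x2 - x1)) / (x3 - x1)
    - ((f x2 - f x1) / (x2 - x1) - (f x1 - f x0) / (x1 - x0)) / (x2 - x0))
    / (x3 - x0)

/-- Second divided difference equals half a slope of the derivative. -/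
lemma dd2_exists (f : ℝ → ℝ) (hdiff : Differentiable ℝ f) (a b c : ℝ)
    (hab : a < b) (hbc : b < c) :
    ∃ z1 ∈ Set.Ioo a b, ∃ z2 ∈ Set.Ioo b c,
      ((f c - f b) / (c - b) - (f b - f a) / (b - a)) / (c - a)
        = (deriv f z2 - deriv f z1) / (2 * (z2 - z1)) := by
  have hba : (b : ℝ) - a ≠ 0 := sub_ne_zero.2 hab.ne'
  have hcb : (c : ℝ) - b ≠ 0 := sub_ne_zero.2 hbc.ne'
  have hca : (c : ℝ) - a ≠ 0 := sub_ne_zero.2 (hab.trans hbc).ne'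
  set D1 : ℝ := (f b - f a) / (b - a) with hD1
  set D2 : ℝ := ((f c - f b) / (c - b) - (f b - f a) / (b - a)) / (c - a) with hD2
  set g : ℝ → ℝ := fun t => f t - (f a + D1 * (t - a) + D2 * (t - a) * (t - b)) with hg
  have hgdiff : Differentiable ℝ g := by
    apply hdiff.sub
    fun_prop
  have hgderiv : ∀ t : ℝ, deriv g t = deriv f t - (D1 + D2 * (2 * t - a - b)) := by
    intro t
    have h1 : HasDerivAt (fun t : ℝ => f a + D1 * (t - a) + D2 * (t - a) * (t - b))
        (D1 + D2 * (2 * t - a - b)) t := by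
      have : HasDerivAt (fun t : ℝ => f a + D1 * (t - a) + D2 * (t - a) * (t - b))
          (0 + D1 * 1 + (D2 * 1 * (t - b) + D2 * (t - a) * 1)) t := by
        apply HasDerivAt.add
        · exact (hasDerivAt_const _ _).add (((hasDerivAt_id t).sub_const a).const_mul D1)
        · exact (((hasDerivAt_id t).sub_const a).const_mul D2).mul
            ((hasDerivAt_id t).sub_const b)
      convert this using 1
      ring
    rw [hg]
    have := ((hdiff t).hasDerivAt.sub h1).deriv
    exact this
  have hga : g a = 0 := by simp [hg]
  have hgb : g b = 0 := by
    simp only [hg, hD1]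
    field_simp
    ring
  have hgc : g c = 0 := by
    simp only [hg, hD1, hD2]
    field_simp
    ring
  obtain ⟨z1, hz1, hz1'⟩ := exists_deriv_eq_zero hab hgdiff.continuous.continuousOn
    (hga.trans hgb.symm)
  obtain ⟨z2, hz2, hz2'⟩ := exists_deriv_eq_zero hbc hgdiff.continuous.continuousOn
    (hgb.trans hgc.symm)
  refine ⟨z1, hz1, z2, hz2, ?_⟩
  rw [hgderiv] at hz1' hz2'
  have h1 : deriv f z1 = D1 + D2 * (2 * z1 - a - b) := by linarith
  have h2 : deriv f z2 = D1 + D2 * (2 * z2 - a - b) := by linarith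
  have hz12 : z2 - z1 ≠ 0 := sub_ne_zero.2 (hz1.2.trans hz2.1).ne'
  rw [h1, h2]
  field_simp
  ring

/-- A 3-monotone function (differentiable with convex derivative) has
nonnegative third divided differences. -/
theorem threeMonotone_dd3_nonneg (f : ℝ → ℝ)
    (hdiff : Differentiable ℝ f) (hconv : ConvexOn ℝ Set.univ (deriv f))
    (x0 x1 x2 x3 : ℝ) (h01 : x0 < x1) (h12 : x1 < x2) (h23 : x2 < x3) :
    0 ≤ dd3 f x0 x1 x2 x3 := by
  obtain ⟨z1, hz1, z2, hz2, hE1⟩ := dd2_exists f hdiff x0 x1 x2 h01 h12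
  obtain ⟨w1, hw1, w2, hw2, hE2⟩ := dd2_exists f hdiff x1 x2 x3 h12 h23
  have hz12 : z1 < z2 := hz1.2.trans hz2.1
  have hw12 : w1 < w2 := hw1.2.trans hw2.1
  have h1w2 : z1 < w2 := hz1.2.trans (h12.trans hw2.1)
  -- slope monotonicity of the convex derivative
  have s1 : (deriv f z2 - deriv f z1) / (z2 - z1)
      ≤ (deriv f w2 - deriv f z1) / (w2 - z1) :=
    hconv.secant_mono (Set.mem_univ _) (Set.mem_univ _) (Set.mem_univ _)
      hz12.ne' h1w2.ne' (hz2.2.trans hw2.1).le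
  have s2 : (deriv f z1 - deriv f w2) / (z1 - w2)
      ≤ (deriv f w1 - deriv f w2) / (w1 - w2) :=
    hconv.secant_mono (Set.mem_univ _) (Set.mem_univ _) (Set.mem_univ _)
      h1w2.ne hw12.ne (hz1.2.trans hw1.1).le
  have s2' : (deriv f w2 - deriv f z1) / (w2 - z1)
      ≤ (deriv f w2 - deriv f w1) / (w2 - w1) := by
    rw [show (deriv f w2 - deriv f z1) / (w2 - z1)
        = (deriv f z1 - deriv f w2) / (z1 - w2) by rw [← neg_div_neg_eq]; ring_nf,
      show (deriv f w2 - deriv f w1) / (w2 - w1)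
        = (deriv f w1 - deriv f w2) / (w1 - w2) by rw [← neg_div_neg_eq]; ring_nf]
    exact s2
  have key : (deriv f z2 - deriv f z1) / (2 * (z2 - z1))
      ≤ (deriv f w2 - deriv f w1) / (2 * (w2 - w1)) := by
    have := s1.trans s2'
    rw [div_le_div_iff₀ (by linarith) (by linarith)] at this ⊢
    nlinarith
  have hd3 : dd3 f x0 x1 x2 x3
      = ((deriv f w2 - deriv f w1) / (2 * (w2 - w1))
          - (deriv f z2 - deriv f z1) / (2 * (z2 - z1))) / (x3 - x0) := by
    rw [dd3, ← hE1, ← hE2]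
  rw [hd3]
  apply div_nonneg (by linarith) (by linarith)
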